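/- Let G be a discrete group and N ⊴ G, and let A be a G-graded *-algebra. Define Θ on generators of A⋊G⋊G⋊(G/N) by Θ(a_s, t, r, gN) = (a_s, t r g N) ⊗ (λ_s M_{χ_t} ρ_r), with values in (A⋊(G/N)) ⊗ End(c_c(G)). Then Θ is multiplicative and *-preserving on generators: for generators x = (a_s, t, r, gN) and y = (b_{s'}, t', r', g'N), Θ(x y) = Θ(x) Θ(y) and Θ(x*) = Θ(x)*, where the operations on A⋊G⋊G⋊(G/N) are the iterated crossed-product operations, the operations on the target are componentwise, and the adjoint on End(c_c(G)) is with respect to the standard inner product. -/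

import Mathlib

/-!
Statement 17 (the isomorphism `Θ` in the proof of Theorem 6.1 of
Kaliszewski–Quigg): for a discrete group `G`, `N ⊴ G`, and a `G`-graded
*-algebra `A`, the map `Θ` defined on generators of `A ⋊ G ⋊ G ⋊ (G/N)` by
`Θ(a_s, t, r, gN) = (a_s, t r gN) ⊗ (λ_s M_{χ_t} ρ_r)`, with values in
`(A ⋊ (G/N)) ⊗ End(c_c(G))`, is multiplicative and *-preserving.

The operator `λ_s M_{χ_t} ρ_r` on `c_c(G) = (G →₀ ℂ)` is the partial
translation `ξ ↦ (ξ (t r)) χ_{s t}`, i.e. the matrix unit `E_{s t, t r}`;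
accordingly `(A ⋊ (G/N)) ⊗ End(c_c(G))` (finite-rank part) is modelled as
`((G × G ⧸ N) × G × G) →₀ A`, an elementary tensor `(a_s, cN) ⊗ E_{x,y}`
being `Finsupp.single ((s, cN), x, y) a`, with componentwise multiplication
(`E_{x,y} E_{x',y'} = [y = x'] E_{x,y'}`) and involution
(`E_{x,y}* = E_{y,x}`, the adjoint for the standard inner product).
-/

attribute [local instance] Classical.propDecidable

noncomputable section

variable {G : Type*} [Group G] {A : Type*} [Ring A] [Algebra ℂ A] [StarRing A]
  [StarModule ℂ A] {N : Subgroup G} [N.Normal]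

/-- `A` is a `G`-graded *-algebra with grading subspaces `𝒜 s`. -/
structure IsStarGrading (𝒜 : G → Submodule ℂ A) : Prop where
  one_mem : (1 : A) ∈ 𝒜 1
  mul_mem : ∀ ⦃s t : G⦄ ⦃a b : A⦄, a ∈ 𝒜 s → b ∈ 𝒜 t → a * b ∈ 𝒜 (s * t)
  star_mem : ∀ ⦃s : G⦄ ⦃a : A⦄, a ∈ 𝒜 s → star a ∈ 𝒜 s⁻¹
  indep : iSupIndep 𝒜
  span_top : ⨆ s, 𝒜 s = ⊤

/-- Left regular representation: `(λ_s ξ)(x) = ξ (s⁻¹ x)`. -/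
def lam (s : G) (ξ : G →₀ ℂ) : G →₀ ℂ :=
  Finsupp.equivMapDomain (Equiv.mulLeft s) ξ

/-- Right regular representation: `(ρ_r ξ)(x) = ξ (x r)`. -/
def rho (r : G) (ξ : G →₀ ℂ) : G →₀ ℂ :=
  Finsupp.equivMapDomain (Equiv.mulRight r⁻¹) ξ

/-- Multiplication by the indicator function `χ_t` of the singleton `{t}`. -/
def mulChi (t : G) (ξ : G →₀ ℂ) : G →₀ ℂ :=
  Finsupp.single t (ξ t)

/-- The operator `λ_s ∘ M_{χ_t} ∘ ρ_r` on `G →₀ ℂ`. -/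
def T (s t r : G) : (G →₀ ℂ) → (G →₀ ℂ) :=
  lam s ∘ mulChi t ∘ rho r

/-- Multiplication on `A ⋊ G ⋊ G ⋊ (G/N)` (generators `(a_s, t, r, gN)` at
index `(s, t, r, gN)`):
`(a,s,t,r,gN)(b,s',t',r',g'N) = (a b, s s', t' r⁻¹, r r', g'N)` if
`t = s' t' r⁻¹` and `gN = r' g'N`, else `0`. -/
def c4Mul (f g : (G × G × G × G ⧸ N) →₀ A) : (G × G × G × G ⧸ N) →₀ A :=
  f.sum fun p a => g.sum fun q b =>
    if p.2.1 = q.1 * q.2.1 * p.2.2.1⁻¹ ∧ p.2.2.2 = (q.2.2.1 : G ⧸ N) * q.2.2.2 then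
      Finsupp.single (p.1 * q.1, q.2.1 * p.2.2.1⁻¹, p.2.2.1 * q.2.2.1, q.2.2.2) (a * b)
    else 0

/-- Involution on `A ⋊ G ⋊ G ⋊ (G/N)`:
`(a,s,t,r,gN)* = (a*, s⁻¹, s t r, r⁻¹, r·gN)`. -/
def c4Star (f : (G × G × G × G ⧸ N) →₀ A) : (G × G × G × G ⧸ N) →₀ A :=
  f.sum fun p a =>
    Finsupp.single (p.1⁻¹, p.1 * p.2.1 * p.2.2.1, p.2.2.1⁻¹,
      (p.2.2.1 : G ⧸ N) * p.2.2.2) (star a)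

/-- Multiplication on `(A ⋊ (G/N)) ⊗ End(c_c(G))`:
`((a,cN) ⊗ E_{x,y})((b,c'N) ⊗ E_{x',y'}) = ((a b, c'N) ⊗ E_{x,y'})` if
`y = x'` and `cN = (deg b)·c'N`, else `0`. -/
def ttMul (f g : ((G × G ⧸ N) × G × G) →₀ A) : ((G × G ⧸ N) × G × G) →₀ A :=
  f.sum fun p a => g.sum fun q b =>
    if p.2.2 = q.2.1 ∧ p.1.2 = (q.1.1 : G ⧸ N) * q.1.2 then
      Finsupp.single ((p.1.1 * q.1.1, q.1.2), p.2.1, q.2.2) (a * b)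
    else 0

/-- Involution on `(A ⋊ (G/N)) ⊗ End(c_c(G))`:
`((a,cN) ⊗ E_{x,y})* = (a*, (deg a)·cN) ⊗ E_{y,x}`. -/
def ttStar (f : ((G × G ⧸ N) × G × G) →₀ A) : ((G × G ⧸ N) × G × G) →₀ A :=
  f.sum fun p a =>
    Finsupp.single ((p.1.1⁻¹, (p.1.1 : G ⧸ N) * p.1.2), p.2.2, p.2.1) (star a)

/-- `Θ(a_s, t, r, gN) = (a_s, t r gN) ⊗ (λ_s M_{χ_t} ρ_r)`, with
`λ_s M_{χ_t} ρ_r = E_{s t, t r}`, extended linearly. -/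
def Theta17 (f : (G × G × G × G ⧸ N) →₀ A) : ((G × G ⧸ N) × G × G) →₀ A :=
  f.sum fun p a =>
    Finsupp.single
      ((p.1, ((p.2.1 * p.2.2.1 : G) : G ⧸ N) * p.2.2.2),
        p.1 * p.2.1, p.2.1 * p.2.2.1) a

/-! ### Auxiliary generic lemmas -/

section Aux

variable {α β γ : Type*}

/-- Generic "matrix-unit style" bilinear multiplication. -/
def bmul (C : α → β → Prop) (ι : α → β → γ) (f : α →₀ A) (g : β →₀ A) : γ →₀ A :=
  f.sum fun p a => g.sum fun q b =>
    if C p q then Finsupp.single (ι p q) (a * b) else 0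

variable (C : α → β → Prop) (ι : α → β → γ)

lemma bmul_single_single (p : α) (a : A) (q : β) (b : A) :
    bmul C ι (Finsupp.single p a) (Finsupp.single q b) =
      if C p q then Finsupp.single (ι p q) (a * b) else 0 := by
  unfold bmul
  rw [Finsupp.sum_single_index, Finsupp.sum_single_index]
  · split <;> simp
  · rw [Finsupp.sum_single_index] <;> split <;> simp

lemma bmul_zero_left (g : β →₀ A) : bmul C ι 0 g = 0 :=
  Finsupp.sum_zero_index

lemma bmul_zero_right (f : α →₀ A) : bmul C ι f 0 = 0 := by
  unfold bmul
  simp [Finsupp.sum_zero_index]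

lemma bmul_add_left (f f' : α →₀ A) (g : β →₀ A) :
    bmul C ι (f + f') g = bmul C ι f g + bmul C ι f' g := by
  unfold bmul
  apply Finsupp.sum_add_index'
  · intro p
    simp only [zero_mul, Finsupp.single_zero, ite_self]
    exact Finset.sum_const_zero
  · intro p a a'
    rw [← Finsupp.sum_add]
    apply Finsupp.sum_congr
    intro q _
    split <;> simp [add_mul, Finsupp.single_add]

lemma bmul_add_right (f : α →₀ A) (g g' : β →₀ A) :
    bmul C ι f (g + g') = bmul C ι f g + bmul C ι f g' := by
  unfold bmul
  rw [← Finsupp.sum_add]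
  apply Finsupp.sum_congr
  intro p _
  apply Finsupp.sum_add_index'
  · intro q; split <;> simp
  · intro q b b'; split <;> simp [mul_add, Finsupp.single_add]

/-- Generic linear extension of `single p a ↦ single (ι p) (φ a)`. -/
def lext (ι : α → γ) (φ : A →+ A) (f : α →₀ A) : γ →₀ A :=
  f.sum fun p a => Finsupp.single (ι p) (φ a)

variable (ι₁ : α → γ) (φ : A →+ A)

lemma lext_single (p : α) (a : A) :
    lext ι₁ φ (Finsupp.single p a) = Finsupp.single (ι₁ p) (φ a) :=
  Finsupp.sum_single_index (by simp)

lemma lext_zero : lext ι₁ φ 0 = 0 :=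
  Finsupp.sum_zero_index

lemma lext_add (f f' : α →₀ A) :
    lext ι₁ φ (f + f') = lext ι₁ φ f + lext ι₁ φ f' :=
  Finsupp.sum_add_index' (fun p => by simp) (fun p a a' => by
    simp [Finsupp.single_add])

end Aux

/-- The index map of `Theta17`. -/
def thIdx : (G × G × G × G ⧸ N) → ((G × G ⧸ N) × G × G) := fun p =>
  ((p.1, ((p.2.1 * p.2.2.1 : G) : G ⧸ N) * p.2.2.2), p.1 * p.2.1, p.2.1 * p.2.2.1)

lemma Theta17_eq (f : (G × G × G × G ⧸ N) →₀ A) :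
    Theta17 f = lext thIdx (AddMonoidHom.id A) f := rfl

lemma c4Mul_eq (f g : (G × G × G × G ⧸ N) →₀ A) :
    c4Mul f g = bmul
      (fun p q => p.2.1 = q.1 * q.2.1 * p.2.2.1⁻¹ ∧
        p.2.2.2 = (q.2.2.1 : G ⧸ N) * q.2.2.2)
      (fun p q => (p.1 * q.1, q.2.1 * p.2.2.1⁻¹, p.2.2.1 * q.2.2.1, q.2.2.2))
      f g := by unfold c4Mul bmul; congr!

lemma ttMul_eq (f g : ((G × G ⧸ N) × G × G) →₀ A) :
    ttMul f g = bmul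
      (fun p q => p.2.2 = q.2.1 ∧ p.1.2 = (q.1.1 : G ⧸ N) * q.1.2)
      (fun p q => ((p.1.1 * q.1.1, q.1.2), p.2.1, q.2.2))
      f g := by unfold ttMul bmul; congr!

lemma c4Star_eq (f : (G × G × G × G ⧸ N) →₀ A) :
    c4Star f = lext
      (fun p => (p.1⁻¹, p.1 * p.2.1 * p.2.2.1, p.2.2.1⁻¹,
        (p.2.2.1 : G ⧸ N) * p.2.2.2))
      (starAddEquiv : A ≃+ A).toAddMonoidHom f := rfl

lemma ttStar_eq (f : ((G × G ⧸ N) × G × G) →₀ A) :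
    ttStar f = lext
      (fun p => ((p.1.1⁻¹, (p.1.1 : G ⧸ N) * p.1.2), p.2.2, p.2.1))
      (starAddEquiv : A ≃+ A).toAddMonoidHom f := rfl

/-! ### Direct additivity/zero lemmas -/

lemma theta_zero : Theta17 (0 : (G × G × G × G ⧸ N) →₀ A) = 0 := by
  rw [Theta17_eq]; exact lext_zero _ _

lemma theta_add (f f' : (G × G × G × G ⧸ N) →₀ A) :
    Theta17 (f + f') = Theta17 f + Theta17 f' := by
  simp only [Theta17_eq]; exact lext_add _ _ _ _

lemma theta_single' (p : G × G × G × G ⧸ N) (a : A) :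
    Theta17 (Finsupp.single p a) = Finsupp.single (thIdx p) a := by
  rw [Theta17_eq, lext_single]; rfl

lemma c4Mul_zero_left (g : (G × G × G × G ⧸ N) →₀ A) : c4Mul 0 g = 0 := by
  rw [c4Mul_eq]; exact bmul_zero_left _ _ _

lemma c4Mul_zero_right (f : (G × G × G × G ⧸ N) →₀ A) : c4Mul f 0 = 0 := by
  rw [c4Mul_eq]; exact bmul_zero_right _ _ _

lemma c4Mul_add_left (f f' g : (G × G × G × G ⧸ N) →₀ A) :
    c4Mul (f + f') g = c4Mul f g + c4Mul f' g := by
  simp only [c4Mul_eq]; exact bmul_add_left _ _ _ _ _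

lemma c4Mul_add_right (f g g' : (G × G × G × G ⧸ N) →₀ A) :
    c4Mul f (g + g') = c4Mul f g + c4Mul f g' := by
  simp only [c4Mul_eq]; exact bmul_add_right _ _ _ _ _

lemma ttMul_zero_left (g : ((G × G ⧸ N) × G × G) →₀ A) : ttMul 0 g = 0 := by
  rw [ttMul_eq]; exact bmul_zero_left _ _ _

lemma ttMul_zero_right (f : ((G × G ⧸ N) × G × G) →₀ A) : ttMul f 0 = 0 := by
  rw [ttMul_eq]; exact bmul_zero_right _ _ _

lemma ttMul_add_left (f f' g : ((G × G ⧸ N) × G × G) →₀ A) :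
    ttMul (f + f') g = ttMul f g + ttMul f' g := by
  simp only [ttMul_eq]; exact bmul_add_left _ _ _ _ _

lemma ttMul_add_right (f g g' : ((G × G ⧸ N) × G × G) →₀ A) :
    ttMul f (g + g') = ttMul f g + ttMul f g' := by
  simp only [ttMul_eq]; exact bmul_add_right _ _ _ _ _

lemma c4Star_zero : c4Star (0 : (G × G × G × G ⧸ N) →₀ A) = 0 := by
  rw [c4Star_eq]; exact lext_zero _ _

lemma c4Star_add (f f' : (G × G × G × G ⧸ N) →₀ A) :
    c4Star (f + f') = c4Star f + c4Star f' := by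
  simp only [c4Star_eq]; exact lext_add _ _ _ _

lemma ttStar_zero : ttStar (0 : ((G × G ⧸ N) × G × G) →₀ A) = 0 := by
  rw [ttStar_eq]; exact lext_zero _ _

lemma ttStar_add (f f' : ((G × G ⧸ N) × G × G) →₀ A) :
    ttStar (f + f') = ttStar f + ttStar f' := by
  simp only [ttStar_eq]; exact lext_add _ _ _ _

lemma c4Star_single (p : G × G × G × G ⧸ N) (a : A) :
    c4Star (Finsupp.single p a) =
      Finsupp.single (p.1⁻¹, p.1 * p.2.1 * p.2.2.1, p.2.2.1⁻¹,
        (p.2.2.1 : G ⧸ N) * p.2.2.2) (star a) := by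
  rw [c4Star_eq, lext_single]; rfl

lemma ttStar_single (p : (G × G ⧸ N) × G × G) (a : A) :
    ttStar (Finsupp.single p a) =
      Finsupp.single ((p.1.1⁻¹, (p.1.1 : G ⧸ N) * p.1.2), p.2.2, p.2.1)
        (star a) := by
  rw [ttStar_eq, lext_single]; rfl

lemma c4Mul_single_single (p q : G × G × G × G ⧸ N) (a b : A) :
    c4Mul (Finsupp.single p a) (Finsupp.single q b) =
      if p.2.1 = q.1 * q.2.1 * p.2.2.1⁻¹ ∧
          p.2.2.2 = (q.2.2.1 : G ⧸ N) * q.2.2.2 then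
        Finsupp.single (p.1 * q.1, q.2.1 * p.2.2.1⁻¹, p.2.2.1 * q.2.2.1,
          q.2.2.2) (a * b)
      else 0 := by
  rw [c4Mul_eq, bmul_single_single]; congr!

lemma ttMul_single_single (p q : (G × G ⧸ N) × G × G) (a b : A) :
    ttMul (Finsupp.single p a) (Finsupp.single q b) =
      if p.2.2 = q.2.1 ∧ p.1.2 = (q.1.1 : G ⧸ N) * q.1.2 then
        Finsupp.single ((p.1.1 * q.1.1, q.1.2), p.2.1, q.2.2) (a * b)
      else 0 := by
  rw [ttMul_eq, bmul_single_single]; congr!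

theorem theta_is_multiplicative_and_star_preserving
    (𝒜 : G → Submodule ℂ A) (h𝒜 : IsStarGrading 𝒜) :
    -- the operator `λ_s M_{χ_t} ρ_r` is the matrix unit `E_{s t, t r}`
    (∀ (s t r : G) (ξ : G →₀ ℂ),
      T s t r ξ = Finsupp.single (s * t) (ξ (t * r))) ∧
    -- `Θ` is the stated map on generators
    (∀ (s t r : G) (gN : G ⧸ N) (a : A), a ∈ 𝒜 s →
      Theta17 (Finsupp.single (s, t, r, gN) a) =
        Finsupp.single ((s, ((t * r : G) : G ⧸ N) * gN), s * t, t * r) a) ∧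
    -- `Θ` is multiplicative and *-preserving
    (∀ f g : (G × G × G × G ⧸ N) →₀ A,
      Theta17 (c4Mul f g) = ttMul (Theta17 f) (Theta17 g)) ∧
    (∀ f : (G × G × G × G ⧸ N) →₀ A,
      Theta17 (c4Star f) = ttStar (Theta17 f)) := by
  refine ⟨?_, ?_, ?_, ?_⟩
  · -- `λ_s M_{χ_t} ρ_r = E_{s t, t r}`
    intro s t r ξ
    simp [T, lam, mulChi, rho, Finsupp.equivMapDomain_single,
      Finsupp.equivMapDomain_apply]
  · -- `Θ` on generators
    intro s t r gN a _
    rw [theta_single']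
    rfl
  · -- multiplicativity
    intro f g
    induction f using Finsupp.induction_linear with
    | zero => rw [c4Mul_zero_left, theta_zero, ttMul_zero_left]
    | add f f' hf hf' =>
      rw [c4Mul_add_left, theta_add, hf, hf', theta_add, ttMul_add_left]
    | single p a =>
      induction g using Finsupp.induction_linear with
      | zero => rw [c4Mul_zero_right, theta_zero, ttMul_zero_right]
      | add g g' hg hg' =>
        rw [c4Mul_add_right, theta_add, hg, hg', theta_add, ttMul_add_right]
      | single q b =>
        obtain ⟨s, t, r, gN⟩ := p
        obtain ⟨s', t', r', g'N⟩ := q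
        rw [c4Mul_single_single, theta_single', theta_single',
          ttMul_single_single]
        have hiff : (t = s' * t' * r⁻¹ ∧ gN = (r' : G ⧸ N) * g'N) ↔
            ((thIdx (N := N) (s, t, r, gN)).2.2 =
              (thIdx (N := N) (s', t', r', g'N)).2.1 ∧
            (thIdx (N := N) (s, t, r, gN)).1.2 =
              ((thIdx (N := N) (s', t', r', g'N)).1.1 : G ⧸ N) *
                (thIdx (N := N) (s', t', r', g'N)).1.2) := by
          simp only [thIdx]
          constructor
          · rintro ⟨h1, h2⟩
            subst h1
            refine ⟨by group, ?_⟩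
            rw [h2]
            simp [QuotientGroup.mk_mul, mul_assoc]
          · rintro ⟨h1, h2⟩
            have h1' : t = s' * t' * r⁻¹ := by
              rw [← h1]; group
            refine ⟨h1', ?_⟩
            subst h1'
            simp only [QuotientGroup.mk_mul, QuotientGroup.mk_inv, mul_assoc,
              mul_right_inj, inv_mul_cancel_left] at h2
            exact h2
        by_cases h : (t = s' * t' * r⁻¹ ∧ gN = (r' : G ⧸ N) * g'N)
        · rw [if_pos h, if_pos (hiff.mp h), theta_single']
          obtain ⟨h1, h2⟩ := h
          subst h1
          simp only [thIdx]
          simp [Prod.ext_iff, QuotientGroup.mk_mul, mul_assoc]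
        · rw [if_neg h, if_neg (fun hc => h (hiff.mpr hc))]
          exact theta_zero
  · -- star-preservation
    intro f
    induction f using Finsupp.induction_linear with
    | zero => rw [c4Star_zero, theta_zero, ttStar_zero]
    | add f f' hf hf' =>
      rw [c4Star_add, theta_add, hf, hf', theta_add, ttStar_add]
    | single p a =>
      obtain ⟨s, t, r, gN⟩ := p
      rw [c4Star_single, theta_single', theta_single', ttStar_single]
      simp only [thIdx]
      congr 1
      simp [Prod.ext_iff, QuotientGroup.mk_mul, mul_assoc]

end
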